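/- Every nonzero ideal of K[x₁,…,xₙ] possesses a finite Janet basis with respect to any monomial ordering ≺. -/

import Mathlib

open scoped MonomialOrder

/-- The variable `i` is Janet-multiplicative for the monomial `u` with respect to the
finite set of monomials `U` (monomials are identified with exponent vectors). -/
def JanetMult {n : ℕ} (U : Finset (Fin n →₀ ℕ)) (u : Fin n →₀ ℕ) (i : Fin n) : Prop :=
  ∀ v ∈ U, (∀ j, j < i → v j = u j) → v i ≤ u i

/-- The Janet cone `J(u,U)`: all monomials `u·m` where `m` is a product of
Janet-multiplicative variables of `u` w.r.t. `U`. -/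
def JanetCone {n : ℕ} (U : Finset (Fin n →₀ ℕ)) (u : Fin n →₀ ℕ) : Set (Fin n →₀ ℕ) :=
  { w | (∀ i, u i ≤ w i) ∧ ∀ i, u i < w i → JanetMult U u i }

/-- The leading monomial (exponent vector) of a polynomial w.r.t. a monomial order. -/
noncomputable def LM {n : ℕ} {K : Type*} [Field K] (m : MonomialOrder (Fin n))
    (f : MvPolynomial (Fin n) K) : Fin n →₀ ℕ :=
  m.toSyn.symm (f.support.sup fun c => m.toSyn c)

/-- `f` has a Janet standard representation w.r.t. the finite polynomial set `G`:
`f = Σ_{g ∈ G} h_g · g` where every monomial of each nonzero `h_g` is a product of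
Janet-multiplicative variables of `LM(g)` w.r.t. `LM(G)`, and `LM(h_g·g) ≼ LM(f)`. -/
def JanetSR {n : ℕ} {K : Type*} [Field K] (m : MonomialOrder (Fin n))
    (G : Finset (MvPolynomial (Fin n) K)) (f : MvPolynomial (Fin n) K) : Prop :=
  ∃ h : MvPolynomial (Fin n) K → MvPolynomial (Fin n) K,
    f = ∑ g ∈ G, h g * g ∧
    ∀ g ∈ G, h g ≠ 0 →
      (∀ c ∈ (h g).support, ∀ i, c i ≠ 0 → JanetMult (G.image (LM m)) (LM m g) i) ∧
      (LM m (h g * g) ≼[m] LM m f)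

/-- `G` is a Janet basis of the ideal `I` w.r.t. the monomial order `m`. -/
def JanetBasis {n : ℕ} {K : Type*} [Field K] (m : MonomialOrder (Fin n))
    (I : Ideal (MvPolynomial (Fin n) K)) (G : Finset (MvPolynomial (Fin n) K)) : Prop :=
  (∀ g ∈ G, g ≠ 0) ∧ (↑G : Set (MvPolynomial (Fin n) K)) ⊆ I ∧
    ∀ f ∈ I, f ≠ 0 → ∃ g ∈ G, LM m f ∈ JanetCone (G.image (LM m)) (LM m g)

lemma exists_dominating {n : ℕ} (L : Set (Fin n →₀ ℕ)) :
    ∃ Gen : Finset (Fin n →₀ ℕ), ↑Gen ⊆ L ∧ ∀ l ∈ L, ∃ g ∈ Gen, g ≤ l := by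
  classical
  set Min : Set (Fin n →₀ ℕ) := {x | x ∈ L ∧ ∀ y ∈ L, ¬ y < x} with hMin
  have hanti : IsAntichain (· ≤ ·) Min := fun a ha b hb hab hle =>
    hb.2 a ha.1 (lt_of_le_of_ne hle hab)
  have hfin : Min.Finite :=
    hanti.finite_of_partiallyWellOrderedOn ((Set.isPWO_of_wellQuasiOrderedLE L).mono (fun x hx => hx.1))
  refine ⟨hfin.toFinset, fun x hx => (hfin.mem_toFinset.1 hx).1, fun l hl => ?_⟩
  set S : Set (Fin n →₀ ℕ) := {x | x ∈ L ∧ x ≤ l} with hS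
  have hSWF : S.IsWF := ((Set.isPWO_of_wellQuasiOrderedLE L).isWF).mono (fun x hx => hx.1)
  have hSne : S.Nonempty := ⟨l, hl, le_rfl⟩
  refine ⟨hSWF.min hSne, hfin.mem_toFinset.2 ⟨(hSWF.min_mem hSne).1, fun y hy hlt => ?_⟩,
    (hSWF.min_mem hSne).2⟩
  exact hSWF.not_lt_min hSne ⟨hy, hlt.le.trans (hSWF.min_mem hSne).2⟩ hlt

lemma janet_cover {n : ℕ} (Gen U : Finset (Fin n →₀ ℕ))
    (hU : ∀ v, v ∈ U ↔ (v ≤ Gen.sup id ∧ ∃ g ∈ Gen, g ≤ v))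
    (w : Fin n →₀ ℕ) (hw : ∃ g ∈ Gen, g ≤ w) :
    ∃ u ∈ U, w ∈ JanetCone U u := by
  classical
  have key : ∀ k : ℕ, ∃ v ∈ U, ∃ g ∈ Gen, g ≤ v ∧
      (∀ i : Fin n, k ≤ i.1 → g i ≤ w i) ∧
      (∀ i : Fin n, i.1 < k → v i ≤ w i ∧ (v i < w i → JanetMult U v i)) := by
    intro k
    induction k with
    | zero =>
      obtain ⟨g, hg, hgw⟩ := hw
      exact ⟨g, (hU g).2 ⟨Finset.le_sup (f := id) hg, g, hg, le_rfl⟩, g, hg, le_rfl,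
        fun i _ => hgw i, fun i hi => absurd hi (Nat.not_lt_zero _)⟩
    | succ k ih =>
      obtain ⟨v, hvU, g, hg, hgv, hgw, hcond⟩ := ih
      by_cases hk : k < n
      · set i : Fin n := ⟨k, hk⟩ with hi
        set C := U.filter (fun v' => ∀ j : Fin n, j < i → v' j = v j) with hCdef
        have hvC : v ∈ C := Finset.mem_filter.2 ⟨hvU, fun j _ => rfl⟩
        have hCne : C.Nonempty := ⟨v, hvC⟩
        set Mx := C.sup' hCne (fun v' => v' i) with hMx
        set c := min (w i) Mx with hc
        set v2 := Finsupp.update v i c with hv2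
        have hv2app : ∀ j, v2 j = if j = i then c else v j := by
          intro j
          rw [hv2, Finsupp.coe_update, Function.update_apply]
        have hgic : g i ≤ c :=
          le_min (hgw i le_rfl) (le_trans (hgv i) (Finset.le_sup' (fun v' => v' i) hvC))
        have hgv2 : g ≤ v2 := by
          intro j
          rw [hv2app j]
          split
          · next h => rw [h] at *; exact hgic
          · exact hgv j
        have hv2U : v2 ∈ U := by
          refine (hU v2).2 ⟨fun j => ?_, g, hg, hgv2⟩
          rw [hv2app j]
          split
          · next h =>
            refine le_trans (min_le_right _ _) (Finset.sup'_le hCne _ fun v' hv' => ?_)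
            have := ((hU v').1 (Finset.mem_filter.1 hv').1).1
            rw [h]; exact this i
          · exact ((hU v).1 hvU).1 j
        refine ⟨v2, hv2U, g, hg, hgv2, fun i' hi' => hgw i' (Nat.le_of_succ_le hi'), ?_⟩
        intro i' hi'
        rcases Nat.lt_succ_iff_lt_or_eq.1 hi' with h | h
        · have hne : i' ≠ i := by
            intro he
            rw [he, hi] at h
            exact absurd h (lt_irrefl k)
          have hval : v2 i' = v i' := by rw [hv2app]; simp [hne]
          have hold := hcond i' h
          rw [hval]
          refine ⟨hold.1, fun hlt => ?_⟩
          intro v' hv'U hpre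
          rw [hval]
          refine hold.2 hlt v' hv'U fun j hj => ?_
          have hji : j ≠ i := by
            intro he
            have : (j : ℕ) < k := lt_trans hj h
            rw [he, hi] at this
            exact absurd this (lt_irrefl k)
          rw [hpre j hj, hv2app]
          simp [hji]
        · have hii : i' = i := Fin.ext h
          rw [hii]
          have hval : v2 i = c := by rw [hv2app]; simp
          rw [hval]
          refine ⟨min_le_left _ _, fun hlt => ?_⟩
          have hcMx : c = Mx := by
            rcases min_cases (w i) Mx with ⟨h1, h2⟩ | ⟨h1, h2⟩
            · rw [hc] at hlt; omega
            · exact h1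
          intro v' hv'U hpre
          have hv'C : v' ∈ C := by
            refine Finset.mem_filter.2 ⟨hv'U, fun j hj => ?_⟩
            rw [hpre j hj, hv2app]
            simp [Fin.ne_of_lt hj]
          rw [hval, hcMx]
          exact Finset.le_sup' (fun v'' => v'' i) hv'C
      · refine ⟨v, hvU, g, hg, hgv, fun i' hi' => hgw i' (Nat.le_of_succ_le hi'), ?_⟩
        intro i' hi'
        exact hcond i' (lt_of_lt_of_le i'.isLt (Nat.not_lt.1 hk))
  obtain ⟨v, hvU, g, hg, hgv, hgw, hcond⟩ := key n
  exact ⟨v, hvU, fun i => (hcond i i.isLt).1, fun i hlt => (hcond i i.isLt).2 hlt⟩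

lemma LM_monomial_mul {n : ℕ} {K : Type*} [Field K] (m : MonomialOrder (Fin n))
    (b : Fin n →₀ ℕ) {f : MvPolynomial (Fin n) K} (hf : f ≠ 0) :
    LM m (MvPolynomial.monomial b (1 : K) * f) = b + LM m f := by
  classical
  have hsupp : (MvPolynomial.monomial b (1:K) * f).support
      = f.support.map (addLeftEmbedding b) := by
    rw [← MvPolynomial.single_eq_monomial]
    exact AddMonoidAlgebra.support_coeff_single_mul f 1 (fun y => by simp) b
  have hne : f.support.Nonempty := MvPolynomial.support_nonempty.2 hf
  unfold LM
  rw [hsupp, Finset.sup_map, ← Finset.sup'_eq_sup hne, ← Finset.sup'_eq_sup hne]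
  have h2 : (fun x => m.toSyn b + x) (f.support.sup' hne (fun c => m.toSyn c))
      = f.support.sup' hne ((fun x => m.toSyn b + x) ∘ (fun c => m.toSyn c)) :=
    Finset.comp_sup'_eq_sup'_comp hne _ (fun x y => (max_add_add_left _ _ _).symm)
  have h3 : f.support.sup' hne ((fun c : Fin n →₀ ℕ => m.toSyn c) ∘ ⇑(addLeftEmbedding b))
      = f.support.sup' hne ((fun x => m.toSyn b + x) ∘ (fun c => m.toSyn c)) := by
    apply Finset.sup'_congr hne rfl
    intro c _
    simp [addLeftEmbedding, map_add]
  rw [h3, ← h2]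
  simp [map_add]

theorem exists_janetBasis' {n : ℕ} {K : Type*} [Field K]
    (m : MonomialOrder (Fin n)) (I : Ideal (MvPolynomial (Fin n) K)) :
    ∃ G : Finset (MvPolynomial (Fin n) K),
      (∀ g ∈ G, g ≠ 0) ∧ (↑G : Set (MvPolynomial (Fin n) K)) ⊆ I ∧
        ∀ f ∈ I, f ≠ 0 → ∃ g ∈ G, LM m f ∈ JanetCone (G.image (LM m)) (LM m g) := by
  classical
  set L : Set (Fin n →₀ ℕ) := {u | ∃ f, f ∈ I ∧ f ≠ 0 ∧ LM m f = u} with hL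
  obtain ⟨Gen, hGenL, hGen⟩ := exists_dominating L
  set D := Gen.sup id with hD
  set U : Finset (Fin n →₀ ℕ) := (Finset.Iic D).filter (fun v => ∃ g ∈ Gen, g ≤ v) with hUdef
  have hU : ∀ v, v ∈ U ↔ (v ≤ D ∧ ∃ g ∈ Gen, g ≤ v) := by
    intro v
    simp [hUdef, Finset.mem_filter, Finset.mem_Iic]
  have hrep : ∀ u ∈ U, ∃ f, f ∈ I ∧ f ≠ 0 ∧ LM m f = u := by
    intro u hu
    obtain ⟨_, g, hg, hgu⟩ := (hU u).1 hu
    obtain ⟨f0, hf0I, hf0ne, hf0LM⟩ := hGenL hg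
    refine ⟨MvPolynomial.monomial (u - g) 1 * f0, I.mul_mem_left _ hf0I,
      mul_ne_zero (by simp) hf0ne, ?_⟩
    rw [LM_monomial_mul m _ hf0ne, hf0LM, tsub_add_cancel_of_le hgu]
  set p : (Fin n →₀ ℕ) → MvPolynomial (Fin n) K := fun u =>
    if h : ∃ f, f ∈ I ∧ f ≠ 0 ∧ LM m f = u then h.choose else 0 with hp
  have hpspec : ∀ u ∈ U, p u ∈ I ∧ p u ≠ 0 ∧ LM m (p u) = u := by
    intro u hu
    have h := hrep u hu
    simp only [hp, dif_pos h]
    exact h.choose_spec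
  have hGLM : (U.image p).image (LM m) = U := by
    rw [Finset.image_image]
    rw [show (LM m ∘ p) = fun u => LM m (p u) from rfl]
    rw [Finset.image_congr (fun u hu => (hpspec u hu).2.2)]
    simp
  refine ⟨U.image p, ?_, ?_, ?_⟩
  · intro g hg
    obtain ⟨u, hu, rfl⟩ := Finset.mem_image.1 hg
    exact (hpspec u hu).2.1
  · intro g hg
    obtain ⟨u, hu, rfl⟩ := Finset.mem_image.1 (Finset.mem_coe.1 hg)
    exact (hpspec u hu).1
  · intro f hf hfne
    have hfL : LM m f ∈ L := ⟨f, hf, hfne, rfl⟩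
    obtain ⟨u, hu, hcone⟩ := janet_cover Gen U hU (LM m f) (hGen _ hfL)
    refine ⟨p u, Finset.mem_image_of_mem p hu, ?_⟩
    rw [hGLM, (hpspec u hu).2.2]
    exact hcone

theorem exists_janetBasis {n : ℕ} {K : Type*} [Field K]
    (m : MonomialOrder (Fin n)) (I : Ideal (MvPolynomial (Fin n) K)) (hI : I ≠ ⊥) :
    ∃ G : Finset (MvPolynomial (Fin n) K), JanetBasis m I G := by
  obtain ⟨G, h1, h2, h3⟩ := exists_janetBasis' m I
  exact ⟨G, h1, h2, h3⟩
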